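/- Let x > 0, let β ≥ 0 and v ∈ ℝ^N be such that y = x + βv > 0 componentwise, and set z = P(y). Then I_A^b(x) − I_A^b(z) ≥ I_A^b(y) − I_A^b(z) − β ∑_{j=1}^N v_j + β ∑_{i=1}^M b_i d_i(v)/d_i(y). -/
import Mathlib


open Finset Filter Topology

noncomputable def dd {M N : ℕ} (A : Fin M → Fin N → ℝ) (x : Fin N → ℝ) (i : Fin M) : ℝ :=
  ∑ j, A i j * x j

noncomputable def ff {M N : ℕ} (A : Fin M → Fin N → ℝ) (b : Fin M → ℝ) (x : Fin N → ℝ) (j : Fin N) : ℝ :=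
  ∑ i, A i j * b i / dd A x i

noncomputable def EMop {M N : ℕ} (A : Fin M → Fin N → ℝ) (b : Fin M → ℝ) (x : Fin N → ℝ) : Fin N → ℝ :=
  fun j => x j * ff A b x j

noncomputable def KL {N : ℕ} (u v : Fin N → ℝ) : ℝ :=
  (∑ j, u j * Real.log (u j / v j)) - ∑ j, (u j - v j)

noncomputable def IAb {M N : ℕ} (A : Fin M → Fin N → ℝ) (b : Fin M → ℝ) (x : Fin N → ℝ) : ℝ :=
  (∑ i, b i * Real.log (b i / dd A x i)) - ∑ i, (b i - dd A x i)

noncomputable def finSup0 {ι : Type*} (s : Finset ι) (g : ι → ℝ) : ℝ :=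
  if h : s.Nonempty then s.sup' h g else 0

noncomputable def finInf0 {ι : Type*} (s : Finset ι) (g : ι → ℝ) : ℝ :=
  if h : s.Nonempty then s.inf' h g else 0

theorem stmt_5
    (M N : ℕ) (hM : 0 < M) (hN : 0 < N)
    (A : Fin M → Fin N → ℝ) (b : Fin M → ℝ)
    (hA : ∀ i j, 0 ≤ A i j)
    (hcol : ∀ j, ∑ i, A i j = 1)
    (hrow : ∀ i, ∃ j, 0 < A i j)
    (hb : ∀ i, 0 < b i)
    (x v : Fin N → ℝ) (β : ℝ)
    (hx : ∀ j, 0 < x j) (hβ : 0 ≤ β)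
    (y : Fin N → ℝ) (hy : y = fun j => x j + β * v j)
    (hypos : ∀ j, 0 < y j)
    (z : Fin N → ℝ) (hz : z = EMop A b y) :
    IAb A b x - IAb A b z ≥
      IAb A b y - IAb A b z - β * (∑ j, v j) +
        β * ∑ i, b i * (dd A v i / dd A y i) := by
  have hdx : ∀ i, 0 < dd A x i := by
    intro i
    obtain ⟨j, hj⟩ := hrow i
    exact Finset.sum_pos' (fun j _ => mul_nonneg (hA i j) (hx j).le)
      ⟨j, Finset.mem_univ j, mul_pos hj (hx j)⟩
  have hdy : ∀ i, 0 < dd A y i := by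
    intro i
    obtain ⟨j, hj⟩ := hrow i
    exact Finset.sum_pos' (fun j _ => mul_nonneg (hA i j) (hypos j).le)
      ⟨j, Finset.mem_univ j, mul_pos hj (hypos j)⟩
  have hlin : ∀ i, dd A y i = dd A x i + β * dd A v i := by
    intro i
    simp only [dd, hy, Finset.mul_sum, ← Finset.sum_add_distrib]
    exact Finset.sum_congr rfl fun j _ => by ring
  have hsumv : ∑ i, dd A v i = ∑ j, v j := by
    simp only [dd]
    rw [Finset.sum_comm]
    refine Finset.sum_congr rfl fun j _ => ?_
    rw [← Finset.sum_mul, hcol j, one_mul]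
  have key : ∀ i ∈ Finset.univ, β * (b i * (dd A v i / dd A y i)) ≤
      b i * Real.log (b i / dd A x i) - b i * Real.log (b i / dd A y i) := by
    intro i _
    have h1 : Real.log (b i / dd A x i) - Real.log (b i / dd A y i)
        = Real.log (dd A y i) - Real.log (dd A x i) := by
      rw [Real.log_div (hb i).ne' (hdx i).ne', Real.log_div (hb i).ne' (hdy i).ne']
      ring
    have h2 : Real.log (dd A x i / dd A y i) ≤ dd A x i / dd A y i - 1 :=
      Real.log_le_sub_one_of_pos (div_pos (hdx i) (hdy i))
    rw [Real.log_div (hdx i).ne' (hdy i).ne'] at h2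
    have h3 : β * (dd A v i / dd A y i) = 1 - dd A x i / dd A y i := by
      rw [← mul_div_assoc, show β * dd A v i = dd A y i - dd A x i from by linarith [hlin i],
        sub_div, div_self (hdy i).ne']
    have h4 : β * (dd A v i / dd A y i) ≤ Real.log (dd A y i) - Real.log (dd A x i) := by
      rw [h3]; linarith
    calc β * (b i * (dd A v i / dd A y i))
        = b i * (β * (dd A v i / dd A y i)) := by ring
      _ ≤ b i * (Real.log (dd A y i) - Real.log (dd A x i)) :=
          mul_le_mul_of_nonneg_left h4 (hb i).le
      _ = b i * Real.log (b i / dd A x i) - b i * Real.log (b i / dd A y i) := by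
          rw [← h1]; ring
  have sumkey := Finset.sum_le_sum key
  rw [Finset.sum_sub_distrib] at sumkey
  have hrw : ∑ i, β * (b i * (dd A v i / dd A y i))
      = β * ∑ i, b i * (dd A v i / dd A y i) := by rw [Finset.mul_sum]
  rw [hrw] at sumkey
  have hdysum : ∑ i, (b i - dd A y i) = ∑ i, (b i - dd A x i) - β * ∑ j, v j := by
    rw [← hsumv, Finset.mul_sum, ← Finset.sum_sub_distrib]
    exact Finset.sum_congr rfl fun i _ => by rw [hlin i]; ring
  simp only [IAb, ge_iff_le]
  rw [hdysum]
  linarith
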